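/- Let X be a geodesic Gromov-hyperbolic metric space. For any x ∈ X and any Schottky set S ⊆ Isom(X), there is a constant L > 0 with the property that for every g ∈ Isom(X) there exists s ∈ S such that τ(sg) ≥ d(x, g·x) − L. -/

import Mathlib

open MeasureTheory ProbabilityTheory Filter Topology Pointwise

noncomputable section

namespace BMS

/-- The Gromov product `(y,z)_x := (d(y,x) + d(z,x) - d(y,z))/2`. -/
def gp {X : Type*} [MetricSpace X] (x y z : X) : ℝ :=
  (dist y x + dist z x - dist y z) / 2

/-- `X` is `δ`-hyperbolic. -/
def HypWith (δ : ℝ) (X : Type*) [MetricSpace X] : Prop :=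
  ∀ x₀ x₁ x₂ x₃ : X, min (gp x₀ x₃ x₁) (gp x₀ x₃ x₂) - δ ≤ gp x₀ x₁ x₂

/-- `X` is Gromov-hyperbolic. -/
def GromovHyperbolic (X : Type*) [MetricSpace X] : Prop :=
  ∃ δ : ℝ, 0 < δ ∧ HypWith δ X

/-- `X` is a geodesic metric space: any two points are joined by an isometrically
parametrized path. -/
def GeodesicSpace (X : Type*) [MetricSpace X] : Prop :=
  ∀ x y : X, ∃ f : ℝ → X, f 0 = x ∧ f (dist x y) = y ∧
    ∀ s ∈ Set.Icc (0 : ℝ) (dist x y), ∀ t ∈ Set.Icc (0 : ℝ) (dist x y),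
      dist (f s) (f t) = |s - t|

/-- The action of `Γ` on `X` is by isometries. -/
def IsIsomAction (Γ X : Type*) [Group Γ] [MetricSpace X] [MulAction Γ X] : Prop :=
  ∀ (g : Γ) (x y : X), dist (g • x) (g • y) = dist x y

/-- The positions of the random walk: `walk ω n = ω 1 * ⋯ * ω n`. -/
def walk {Γ Ω : Type*} [Group Γ] (ω : ℕ → Ω → Γ) : ℕ → Ω → Γ
  | 0 => fun _ => 1
  | n + 1 => fun ρ => walk ω n ρ * ω (n + 1) ρ

/-- Extended-real valued logarithm of an extended nonnegative real, with `elog 0 = ⊥`. -/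
def elog (x : ENNReal) : EReal :=
  if x = 0 then ⊥ else ((Real.log x.toReal : ℝ) : EReal)

/-- `(1/n)·log P(Z n ∈ R)`, as an extended real number. -/
def logProbRate {Ω : Type*} [MeasurableSpace Ω] (P : Measure Ω) (Z : ℕ → Ω → ℝ)
    (R : Set ℝ) (n : ℕ) : EReal :=
  (((n : ℝ)⁻¹ : ℝ) : EReal) * elog (P {ρ | Z n ρ ∈ R})

/-- The sequence of real random variables `Z n` satisfies a (full) large deviation
principle under `P` with rate function `I`. -/
def HasLDP {Ω : Type*} [MeasurableSpace Ω] (P : Measure Ω) (Z : ℕ → Ω → ℝ)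
    (I : ℝ → ENNReal) : Prop :=
  LowerSemicontinuous I ∧
  ∀ R : Set ℝ, MeasurableSet R →
    (-(⨅ α ∈ interior R, ((I α : EReal))) ≤ liminf (logProbRate P Z R) atTop ∧
      limsup (logProbRate P Z R) atTop ≤ -(⨅ α ∈ closure R, ((I α : EReal))))

/-- Weak large deviation principle: the lower bound holds for all measurable sets and
the upper bound for bounded measurable sets. -/
def HasWeakLDP {Ω : Type*} [MeasurableSpace Ω] (P : Measure Ω) (Z : ℕ → Ω → ℝ)
    (I : ℝ → ENNReal) : Prop :=
  LowerSemicontinuous I ∧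
  ∀ R : Set ℝ, MeasurableSet R →
    (-(⨅ α ∈ interior R, ((I α : EReal))) ≤ liminf (logProbRate P Z R) atTop ∧
      (Bornology.IsBounded R →
        limsup (logProbRate P Z R) atTop ≤ -(⨅ α ∈ closure R, ((I α : EReal)))))

/-- Convexity of an `[0,∞]`-valued function on `ℝ`. -/
def ConvexRate (I : ℝ → ENNReal) : Prop :=
  ∀ x y t : ℝ, 0 ≤ t → t ≤ 1 →
    I (t * x + (1 - t) * y) ≤ ENNReal.ofReal t * I x + ENNReal.ofReal (1 - t) * I y

/-- A rate function is proper if its sublevel sets are compact. -/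
def ProperRate (I : ℝ → ENNReal) : Prop :=
  ∀ c : ENNReal, c ≠ ⊤ → IsCompact {x : ℝ | I x ≤ c}

/-- The support of a measure on a countable discrete space. -/
def measSupport {Γ : Type*} [MeasurableSpace Γ] (μ : Measure Γ) : Set Γ :=
  {g | μ {g} ≠ 0}

/-- `S` is a Schottky set with respect to the basepoint `z0`. -/
def IsSchottky {Γ X : Type*} [Group Γ] [MetricSpace X] [MulAction Γ X]
    (z0 : X) (S : Set Γ) : Prop :=
  S.Finite ∧ S.Nonempty ∧ ∃ C : ℝ, 0 < C ∧ ∀ y z : X,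
    (2 / 3 : ℝ) * (S.ncard : ℝ) ≤ (({s ∈ S | gp z0 y (s • z) ≤ C} : Set Γ).ncard : ℝ)

/-- `u : ℤ → X` is a quasi-geodesic. -/
def QuasiGeodZ {X : Type*} [MetricSpace X] (u : ℤ → X) : Prop :=
  ∃ lam C : ℝ, 1 ≤ lam ∧ 0 ≤ C ∧ ∀ m n : ℤ,
    lam⁻¹ * |(m : ℝ) - (n : ℝ)| - C ≤ dist (u m) (u n) ∧
      dist (u m) (u n) ≤ lam * |(m : ℝ) - (n : ℝ)| + C

/-- `g` is a loxodromic isometry: some (equivalently, any) orbit map `n ↦ g^n • x`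
is a quasi-geodesic. -/
def IsLoxodromic (X : Type*) {Γ : Type*} [MetricSpace X] [Group Γ] [MulAction Γ X]
    (g : Γ) : Prop :=
  ∃ x : X, QuasiGeodZ (fun n : ℤ => (g ^ n) • x)

/-- The forward (`s = true`) or backward (`s = false`) orbit ray of `g` from `z0`. -/
def raySeq {Γ X : Type*} [Group Γ] [MetricSpace X] [MulAction Γ X]
    (z0 : X) (g : Γ) (s : Bool) : ℕ → X :=
  fun n => (g ^ (if s then (n : ℤ) else -(n : ℤ))) • z0

/-- Two sequences define the same point of the Gromov boundary. -/
def SameEnd {X : Type*} [MetricSpace X] (z0 : X) (u v : ℕ → X) : Prop :=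
  Tendsto (fun n => gp z0 (u n) (v n)) atTop atTop

/-- `g` and `h` are independent loxodromic elements: both are loxodromic and their
four boundary fixed points are pairwise distinct. -/
def IndepLox {Γ X : Type*} [Group Γ] [MetricSpace X] [MulAction Γ X]
    (z0 : X) (g h : Γ) : Prop :=
  IsLoxodromic X g ∧ IsLoxodromic X h ∧
  (¬ SameEnd z0 (raySeq z0 g true) (raySeq z0 g false)) ∧
  (¬ SameEnd z0 (raySeq z0 h true) (raySeq z0 h false)) ∧
  (∀ s t : Bool, ¬ SameEnd z0 (raySeq z0 g s) (raySeq z0 h t))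

/-- A set `B` of isometries is non-elementary: the subsemigroup it generates contains
two independent loxodromic elements. -/
def NonElementarySet {Γ X : Type*} [Group Γ] [MetricSpace X] [MulAction Γ X]
    (z0 : X) (B : Set Γ) : Prop :=
  ∃ g h : Γ, g ∈ Subsemigroup.closure B ∧ h ∈ Subsemigroup.closure B ∧ IndepLox z0 g h

/-- A probability measure is non-elementary if its support is. -/
def NonElementary {Γ X : Type*} [Group Γ] [MeasurableSpace Γ] [MetricSpace X] [MulAction Γ X]
    (z0 : X) (μ : Measure Γ) : Prop :=
  NonElementarySet z0 (measSupport μ)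

/-- The translation length `τ(g) := inf_x d(x, g•x)`. -/
def translationLength (X : Type*) {Γ : Type*} [MetricSpace X] [Group Γ] [MulAction Γ X]
    (g : Γ) : ℝ :=
  ⨅ x : X, dist x (g • x)

/-- The asymptotic (stable) translation length `ℓ(g) = lim_n d(g^n • z0, z0)/n`;
by Fekete's subadditivity lemma the limit equals the infimum over `n ≥ 1`. -/
def stableLength {Γ X : Type*} [Group Γ] [MetricSpace X] [MulAction Γ X]
    (z0 : X) (g : Γ) : ℝ :=
  ⨅ n : ℕ, dist ((g ^ (n + 1)) • z0) z0 / (n + 1)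

/-- `B` is non-arithmetic: some power `B^n` contains two elements with different
asymptotic translation lengths. -/
def NonArithmetic {Γ X : Type*} [Group Γ] [MetricSpace X] [MulAction Γ X]
    (z0 : X) (B : Set Γ) : Prop :=
  ∃ (n : ℕ) (g₁ g₂ : Γ), g₁ ∈ B ^ n ∧ g₂ ∈ B ^ n ∧
    stableLength z0 g₁ ≠ stableLength z0 g₂

/-- `sup_{g ∈ B^n} d(g•z0, z0)`, valued in `[0,∞]`. -/
def dispSup {Γ X : Type*} [Group Γ] [MetricSpace X] [MulAction Γ X]
    (z0 : X) (B : Set Γ) (n : ℕ) : ENNReal :=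
  ⨆ g ∈ B ^ n, ENNReal.ofReal (dist (g • z0) z0)

/-- `inf_{g ∈ B^n} d(g•z0, z0)`, valued in `[0,∞]`. -/
def dispInf {Γ X : Type*} [Group Γ] [MetricSpace X] [MulAction Γ X]
    (z0 : X) (B : Set Γ) (n : ℕ) : ENNReal :=
  ⨅ g ∈ B ^ n, ENNReal.ofReal (dist (g • z0) z0)

/-- `μ` has a finite exponential moment:
`E[exp (λ·d(z0, ω 1 • z0))] < ∞` for some `λ > 0`. -/
def FiniteExpMoment {Γ Ω X : Type*} [Group Γ] [MetricSpace X] [MulAction Γ X]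
    [MeasurableSpace Ω] (P : Measure Ω) (ω : ℕ → Ω → Γ) (z0 : X) : Prop :=
  ∃ lam : ℝ, 0 < lam ∧
    Integrable (fun ρ => Real.exp (lam * dist ((ω 1 ρ) • z0) z0)) P

/-- The increments `ω i` are i.i.d. with common law `μ`. -/
def IIDWalk {Γ Ω : Type*} [Group Γ] [MeasurableSpace Γ] [MeasurableSpace Ω]
    (P : Measure Ω) (ω : ℕ → Ω → Γ) (μ : Measure Γ) : Prop :=
  (∀ i, Measurable (ω i)) ∧
  iIndepFun ω P ∧
  ∀ i, P.map (ω i) = μ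

/-- `-(1/n)·log P(d(z_n, z0) ≤ a·n)`. -/
def belowRate {Γ Ω X : Type*} [Group Γ] [MetricSpace X] [MulAction Γ X]
    [MeasurableSpace Ω] (P : Measure Ω) (ω : ℕ → Ω → Γ) (z0 : X) (a : ℝ) (n : ℕ) : EReal :=
  -((((n : ℝ)⁻¹ : ℝ) : EReal) * elog (P {ρ | dist ((walk ω n ρ) • z0) z0 ≤ a * n}))

/-- `-(1/n)·log P(d(z_n, z0) ≥ a·n)`. -/
def aboveRate {Γ Ω X : Type*} [Group Γ] [MetricSpace X] [MulAction Γ X]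
    [MeasurableSpace Ω] (P : Measure Ω) (ω : ℕ → Ω → Γ) (z0 : X) (a : ℝ) (n : ℕ) : EReal :=
  -((((n : ℝ)⁻¹ : ℝ) : EReal) * elog (P {ρ | a * n ≤ dist ((walk ω n ρ) • z0) z0}))

end BMS
namespace BMS

section Aux

variable {X : Type*} [MetricSpace X] {Γ : Type*} [Group Γ] [MulAction Γ X]

lemma gp_nonneg (x y z : X) : 0 ≤ gp x y z := by
  have h1 := dist_triangle y x z
  have h2 := dist_comm x z
  unfold gp; linarith

lemma gp_comm (x y z : X) : gp x y z = gp x z y := by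
  unfold gp; rw [dist_comm y z]; ring

lemma gp_smul (hiso : IsIsomAction Γ X) (u : Γ) (x y z : X) :
    gp (u • x) (u • y) (u • z) = gp x y z := by
  unfold gp; rw [hiso u y x, hiso u z x, hiso u y z]

lemma gp_lip (x y z z' : X) : gp x y z ≤ gp x y z' + dist z z' := by
  have h1 := dist_triangle z z' x
  have h2 := dist_triangle y z z'
  have h3 := dist_comm z z'
  have h4 := dist_comm z' x
  unfold gp; linarith

lemma chain_dist (hiso : IsIsomAction Γ X) {δ : ℝ} (hδ : 0 < δ) (hhyp : HypWith δ X)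
    (z0 : X) (h : Γ)
    (hd : 2 * gp z0 (h • z0) (h⁻¹ • z0) + 2 * δ < dist z0 (h • z0)) :
    ∀ n : ℕ, (n : ℝ) * (dist z0 (h • z0) - 2 * gp z0 (h • z0) (h⁻¹ • z0) - 2 * δ)
      ≤ dist z0 ((h ^ n) • z0) := by
  set A := gp z0 (h • z0) (h⁻¹ • z0) with hA
  set d1 := dist z0 (h • z0) with hd1
  have hxsucc : ∀ n : ℕ, (h ^ (n + 1)) • z0 = (h ^ n) • (h • z0) := by
    intro n; rw [← mul_smul, ← pow_succ]
  have hxpred : ∀ n : ℕ, (h ^ n) • z0 = (h ^ (n + 1)) • (h⁻¹ • z0) := by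
    intro n; rw [← mul_smul, pow_succ, mul_inv_cancel_right]
  have f1 : ∀ n : ℕ, dist ((h ^ n) • z0) ((h ^ (n + 1)) • z0) = d1 := by
    intro n; rw [hxsucc n, hiso, hd1]
  have f2 : ∀ n : ℕ, gp ((h ^ (n + 1)) • z0) ((h ^ n) • z0) ((h ^ (n + 1 + 1)) • z0) = A := by
    intro n
    rw [hxpred n, hxsucc (n + 1), gp_smul hiso]
    rw [gp_comm, hA]
  have hgp : ∀ n : ℕ, gp ((h ^ n) • z0) z0 ((h ^ (n + 1)) • z0) ≤ A + δ := by
    intro n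
    induction n with
    | zero =>
      have h0 : (h ^ 0) • z0 = z0 := by rw [pow_zero, one_smul]
      have hz : gp ((h ^ 0) • z0) z0 ((h ^ (0 + 1)) • z0) = 0 := by
        rw [h0]; unfold gp; rw [dist_comm z0 ((h ^ (0 + 1)) • z0)]; simp
      rw [hz]
      have := gp_nonneg z0 (h • z0) (h⁻¹ • z0)
      rw [← hA] at this
      linarith
    | succ n ih =>
      have hineq := hhyp ((h ^ (n + 1)) • z0) ((h ^ n) • z0) ((h ^ (n + 1 + 1)) • z0) z0
      rw [f2 n] at hineq
      have ha : gp ((h ^ (n + 1)) • z0) z0 ((h ^ n) • z0)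
          = d1 - gp ((h ^ n) • z0) z0 ((h ^ (n + 1)) • z0) := by
        have hf1 := f1 n
        have c1 := dist_comm ((h ^ n) • z0) ((h ^ (n + 1)) • z0)
        unfold gp
        linarith
      have hmin : min (gp ((h ^ (n + 1)) • z0) z0 ((h ^ n) • z0))
          (gp ((h ^ (n + 1)) • z0) z0 ((h ^ (n + 1 + 1)) • z0)) ≤ A + δ := by
        linarith
      rcases min_le_iff.mp hmin with hc | hc
      · linarith
      · exact hc
  intro n
  induction n with
  | zero => simpa using dist_nonneg
  | succ n ih =>
    have hgpn := hgp n
    have hid : 2 * gp ((h ^ n) • z0) z0 ((h ^ (n + 1)) • z0)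
        = dist z0 ((h ^ n) • z0) + dist ((h ^ (n + 1)) • z0) ((h ^ n) • z0)
          - dist z0 ((h ^ (n + 1)) • z0) := by
      unfold gp; ring
    have hcd := dist_comm ((h ^ (n + 1)) • z0) ((h ^ n) • z0)
    have hf1 := f1 n
    push_cast
    linarith

lemma tl_ge (hiso : IsIsomAction Γ X) {δ : ℝ} (hδ : 0 < δ) (hhyp : HypWith δ X)
    (z0 : X) (h : Γ) :
    dist z0 (h • z0) - 2 * gp z0 (h • z0) (h⁻¹ • z0) - 2 * δ ≤ translationLength X h := by
  haveI : Nonempty X := ⟨z0⟩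
  set K := dist z0 (h • z0) - 2 * gp z0 (h • z0) (h⁻¹ • z0) - 2 * δ with hK
  have hτ0 : (0 : ℝ) ≤ translationLength X h := le_ciInf fun y => dist_nonneg
  rcases le_or_gt K 0 with hK0 | hK0
  · linarith
  · have hd : 2 * gp z0 (h • z0) (h⁻¹ • z0) + 2 * δ < dist z0 (h • z0) := by
      rw [hK] at hK0; linarith
    have hchain := chain_dist hiso hδ hhyp z0 h hd
    refine le_ciInf fun y => ?_
    by_contra hlt
    push_neg at hlt
    have hstep : ∀ n : ℕ, dist y ((h ^ n) • y) ≤ (n : ℝ) * dist y (h • y) := by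
      intro n
      induction n with
      | zero => simp
      | succ n ih =>
        have h1 : dist ((h ^ n) • y) ((h ^ (n + 1)) • y) = dist y (h • y) := by
          rw [show (h ^ (n + 1)) • y = (h ^ n) • (h • y) by rw [← mul_smul, ← pow_succ],
            hiso]
        have h2 := dist_triangle y ((h ^ n) • y) ((h ^ (n + 1)) • y)
        push_cast
        linarith
    have hcomp : ∀ n : ℕ, dist z0 ((h ^ n) • z0) ≤ dist y ((h ^ n) • y) + 2 * dist y z0 := by
      intro n
      have h1 := dist_triangle z0 y ((h ^ n) • z0)
      have h2 := dist_triangle y ((h ^ n) • y) ((h ^ n) • z0)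
      have h3 : dist ((h ^ n) • y) ((h ^ n) • z0) = dist y z0 := hiso _ _ _
      have h4 := dist_comm z0 y
      linarith
    have hpos : 0 < K - dist y (h • y) := by linarith
    obtain ⟨n, hn⟩ := exists_nat_gt (2 * dist y z0 / (K - dist y (h • y)))
    have h8 := (div_lt_iff₀ hpos).mp hn
    have h5 := hchain n
    have h6 := hstep n
    have h7 := hcomp n
    rw [← hK] at h5
    nlinarith

end Aux

/-- **Lemma (Schottky sets and translation lengths).** Let `X` be a geodesic
Gromov-hyperbolic space. For any `x ∈ X` and any Schottky set `S`, there is `L > 0` such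
that every isometry `g` admits `s ∈ S` with `τ(s g) ≥ d(x, g•x) - L`. -/
theorem schottky_translation_length
    {X : Type*} [MetricSpace X] {Γ : Type*} [Group Γ] [MulAction Γ X]
    (hiso : IsIsomAction Γ X) (hgeo : GeodesicSpace X) (hhyp : GromovHyperbolic X)
    (z0 x : X) (S : Set Γ) (hS : IsSchottky z0 S) :
    ∃ L : ℝ, 0 < L ∧ ∀ g : Γ, ∃ s ∈ S,
      dist x (g • x) - L ≤ translationLength X (s * g) := by
  obtain ⟨hfin, hne, C, hC, hsch⟩ := hS
  obtain ⟨δ, hδ, hhypδ⟩ := hhyp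
  obtain ⟨D, hD⟩ := (hfin.image (fun s => dist (s • z0) z0)).bddAbove
  have hDS : ∀ s ∈ S, dist (s • z0) z0 ≤ D := fun s hs => hD (Set.mem_image_of_mem _ hs)
  obtain ⟨s0, hs0⟩ := hne
  have hD0 : (0 : ℝ) ≤ D := le_trans dist_nonneg (hDS s0 hs0)
  have hxz : (0 : ℝ) ≤ dist x z0 := dist_nonneg
  refine ⟨3 * D + 2 * C + 2 * δ + 2 * dist x z0 + 1, by linarith, fun g => ?_⟩
  have hcard := hsch (g⁻¹ • z0) (g • z0)
  have hSpos : (0 : ℝ) < (S.ncard : ℝ) := by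
    have := (Set.ncard_pos hfin).mpr ⟨s0, hs0⟩
    exact_mod_cast this
  have hne1 : ({s ∈ S | gp z0 (g⁻¹ • z0) (s • (g • z0)) ≤ C}).Nonempty := by
    apply Set.nonempty_of_ncard_ne_zero
    intro h0
    rw [h0] at hcard
    push_cast at hcard
    nlinarith
  obtain ⟨s, hsS, hsgp⟩ := hne1
  refine ⟨s, hsS, ?_⟩
  set h := s * g with hh
  have hz1 : h • z0 = s • (g • z0) := mul_smul s g z0
  have hz2 : h⁻¹ • z0 = g⁻¹ • (s⁻¹ • z0) := by rw [hh, mul_inv_rev, mul_smul]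
  have hdist2 : dist (s⁻¹ • z0) z0 = dist (s • z0) z0 := by
    rw [← hiso s (s⁻¹ • z0) z0, smul_inv_smul, dist_comm]
  have hdist1 : dist (h⁻¹ • z0) (g⁻¹ • z0) = dist (s • z0) z0 := by
    rw [hz2, hiso, hdist2]
  have hA1 := gp_lip z0 (h • z0) (h⁻¹ • z0) (g⁻¹ • z0)
  have hA2 : gp z0 (h • z0) (g⁻¹ • z0) ≤ C := by
    rw [hz1, gp_comm]; exact hsgp
  have hA : gp z0 (h • z0) (h⁻¹ • z0) ≤ C + D := by
    have := hDS s hsS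
    linarith
  have hd1 : dist z0 (g • z0) - D ≤ dist z0 (h • z0) := by
    have e1 : dist z0 (h • z0) = dist (s⁻¹ • z0) (g • z0) := by
      rw [← hiso s⁻¹ z0 (h • z0), hz1, inv_smul_smul]
    have e2 := dist_triangle z0 (s⁻¹ • z0) (g • z0)
    have e3 : dist z0 (s⁻¹ • z0) = dist (s • z0) z0 := by rw [dist_comm, hdist2]
    have := hDS s hsS
    linarith
  have htl := tl_ge hiso hδ hhypδ z0 h
  have hx1 : dist x (g • x) ≤ dist z0 (g • z0) + 2 * dist x z0 := by
    have t1 := dist_triangle x z0 (g • x)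
    have t2 := dist_triangle z0 (g • z0) (g • x)
    have t3 : dist (g • z0) (g • x) = dist z0 x := hiso g z0 x
    have t4 := dist_comm z0 x
    linarith
  linarith


end BMS
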